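/- arXiv:math/0403505 — 3 statements merged into one kernel-verified Lean document; each statement's English description precedes it below -/
import Mathlib

section
/- The map i : ℕ → flow graphs given by i(n) = F_n is injective and satisfies: i(0) = F_0, i(1) = F_1, i(n + m) = i(n) ⊕ i(m), i(n · m) = i(n) ⊗ i(m), and n ≤ m if and only if i(n) ≤ i(m) in the weak order, for all natural numbers n and m. (Thus the standard model of arithmetic on ℕ is a submodel of the structure of flow graphs with these operations.) -/
/-- A flow graph: a finite directed multigraph (loops and parallel edges allowed)
with a distinguished source vertex `s` and target vertex `t`.
(Connectedness is stated as a separate predicate `FlowGraph.Connected`.) -/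
structure FlowGraph where
  V : Type
  E : Type
  [finV : Finite V]
  [finE : Finite E]
  src : E → V
  tgt : E → V
  s : V
  t : V

attribute [instance] FlowGraph.finV FlowGraph.finE

namespace FlowGraph

/-- Adjacency in the underlying undirected multigraph, using only edges in `ES`. -/
def adjOn (A : FlowGraph) (ES : Set A.E) (u v : A.V) : Prop :=
  ∃ e ∈ ES, (A.src e = u ∧ A.tgt e = v) ∨ (A.src e = v ∧ A.tgt e = u)

/-- Reachability in the underlying undirected multigraph, using only edges in `ES`. -/
def reachOn (A : FlowGraph) (ES : Set A.E) : A.V → A.V → Prop :=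
  Relation.ReflTransGen (A.adjOn ES)

/-- The multigraph underlying a flow graph is connected. -/
def Connected (A : FlowGraph) : Prop := ∀ u v : A.V, A.reachOn Set.univ u v

/-- Isomorphism of flow graphs: a graph isomorphism mapping source to source
and target to target.  Equality "as flow graphs" means `Iso`. -/
def Iso (A B : FlowGraph) : Prop :=
  ∃ (φV : A.V ≃ B.V) (φE : A.E ≃ B.E),
    (∀ e, B.src (φE e) = φV (A.src e)) ∧
    (∀ e, B.tgt (φE e) = φV (A.tgt e)) ∧
    φV A.s = B.s ∧ φV A.t = B.t

/-- The relation identifying `t_A` with `s_B` in the disjoint union of vertex sets. -/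
def addRel (A B : FlowGraph) : (A.V ⊕ B.V) → (A.V ⊕ B.V) → Prop :=
  fun x y => x = Sum.inl A.t ∧ y = Sum.inr B.s

/-- The sum `A ⊕ B` of flow graphs: disjoint copies of `A` and `B`
with `t_A` identified with `s_B`; source `s_A`, target `t_B`. -/
def add (A B : FlowGraph) : FlowGraph where
  V := Quot (addRel A B)
  E := A.E ⊕ B.E
  src := fun e =>
    Quot.mk _ (Sum.elim (fun a => Sum.inl (A.src a)) (fun b => Sum.inr (B.src b)) e)
  tgt := fun e =>
    Quot.mk _ (Sum.elim (fun a => Sum.inl (A.tgt a)) (fun b => Sum.inr (B.tgt b)) e)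
  s := Quot.mk _ (Sum.inl A.s)
  t := Quot.mk _ (Sum.inr B.t)

/-- The relation gluing, for every edge `e = (u,v)` of `A`, the source of the
`e`-th copy of `B` to `u` and its target to `v`. -/
def mulRel (A B : FlowGraph) : (A.V ⊕ A.E × B.V) → (A.V ⊕ A.E × B.V) → Prop :=
  fun x y => ∃ e : A.E,
    (x = Sum.inr (e, B.s) ∧ y = Sum.inl (A.src e)) ∨
    (x = Sum.inr (e, B.t) ∧ y = Sum.inl (A.tgt e))

/-- The product `A ⊗ B` of flow graphs: every directed edge `e = (u,v)` of `A` is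
replaced by a fresh copy of `B`, with `u` identified with the source of the copy
and `v` with its target; source `s_A`, target `t_A`. -/
def mul (A B : FlowGraph) : FlowGraph where
  V := Quot (mulRel A B)
  E := A.E × B.E
  src := fun p => Quot.mk _ (Sum.inr (p.1, B.src p.2))
  tgt := fun p => Quot.mk _ (Sum.inr (p.1, B.tgt p.2))
  s := Quot.mk _ (Sum.inl A.s)
  t := Quot.mk _ (Sum.inl A.t)

/-- The trivial flow graph `F₀`: one vertex, no edges, source = target. -/
def F0 : FlowGraph where
  V := Unit
  E := Empty
  src := Empty.elim
  tgt := Empty.elim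
  s := ()
  t := ()

/-- The flow graph `F₁`: a single directed edge from source to target. -/
def F1 : FlowGraph where
  V := Bool
  E := Unit
  src := fun _ => false
  tgt := fun _ => true
  s := false
  t := true

/-- The graphical natural number `n`: the directed path with `n+1` vertices and
`n` edges, source its initial vertex and target its final vertex. -/
def pathGraph (n : ℕ) : FlowGraph where
  V := Fin (n + 1)
  E := Fin n
  src := fun e => e.castSucc
  tgt := fun e => e.succ
  s := 0
  t := Fin.last n

/-- A flow graph is infinitesimal if it is nontrivial and its source equals its target. -/
def Infinitesimal (A : FlowGraph) : Prop := ¬ A.Iso F0 ∧ A.s = A.t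

/-- `w` is a splitting vertex of `A`: `w ≠ s_A, t_A`, and after deleting `w`
(i.e. using only edges not incident to `w`), `s_A` and `t_A` lie in distinct
components (hence deletion produces at least two components). -/
def IsSplittingVertex (A : FlowGraph) (w : A.V) : Prop :=
  w ≠ A.s ∧ w ≠ A.t ∧ ¬ A.reachOn {e | A.src e ≠ w ∧ A.tgt e ≠ w} A.s A.t

/-- `e₀` is a splitting edge of `A`: deleting `e₀` leaves exactly two components,
one containing `s_A` and the other containing `t_A`. -/
def IsSplittingEdge (A : FlowGraph) (e₀ : A.E) : Prop :=
  ¬ A.reachOn {e | e ≠ e₀} A.s A.t ∧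
  ∀ v : A.V, A.reachOn {e | e ≠ e₀} v A.s ∨ A.reachOn {e | e ≠ e₀} v A.t

/-- The initial vertex of a directed edge traversed with direction `dir`
(`true` = forwards, `false` = backwards). -/
def stepSrc (A : FlowGraph) (p : A.E × Bool) : A.V := if p.2 then A.src p.1 else A.tgt p.1

/-- The final vertex of a directed edge traversed with direction `dir`. -/
def stepTgt (A : FlowGraph) (p : A.E × Bool) : A.V := if p.2 then A.tgt p.1 else A.src p.1

/-- `l` is a walk from `u` to `v` in the underlying undirected multigraph:
a list of edges each traversed in some direction, consecutively matching. -/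
def IsWalk (A : FlowGraph) : A.V → A.V → List (A.E × Bool) → Prop
  | u, v, [] => u = v
  | u, v, p :: l => A.stepSrc p = u ∧ A.IsWalk (A.stepTgt p) v l

/-- The list of vertices visited by a walk starting at `u`. -/
def walkVertices (A : FlowGraph) (u : A.V) : List (A.E × Bool) → List A.V
  | [] => [u]
  | p :: l => u :: A.walkVertices (A.stepTgt p) l

/-- The edge `e` has the ST property: some non-self-intersecting path from `s_A`
to `t_A` in the underlying undirected multigraph traverses `e`. -/
def HasST (A : FlowGraph) (e : A.E) : Prop :=
  ∃ l : List (A.E × Bool), A.IsWalk A.s A.t l ∧ (A.walkVertices A.s l).Nodup ∧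
    ∃ dir : Bool, (e, dir) ∈ l

/-- `A` is an st-flow graph: every edge has the ST property. -/
def IsSTGraph (A : FlowGraph) : Prop := ∀ e : A.E, A.HasST e

/-- The vertex set of the st-core: `s_A`, `t_A`, and all endpoints of ST edges. -/
def stCoreV (A : FlowGraph) : Set A.V :=
  {v | v = A.s ∨ v = A.t ∨ ∃ e, A.HasST e ∧ (A.src e = v ∨ A.tgt e = v)}

/-- The st-core of `A`: delete all edges without the ST property and keep the
subgraph induced by the remaining edges together with `s_A` and `t_A`. -/
def stCore (A : FlowGraph) : FlowGraph where
  V := {v // v ∈ A.stCoreV}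
  E := {e // A.HasST e}
  src := fun e => ⟨A.src e.1, Or.inr (Or.inr ⟨e.1, e.2, Or.inl rfl⟩)⟩
  tgt := fun e => ⟨A.tgt e.1, Or.inr (Or.inr ⟨e.1, e.2, Or.inr rfl⟩)⟩
  s := ⟨A.s, Or.inl rfl⟩
  t := ⟨A.t, Or.inr (Or.inl rfl)⟩

/-- An embedding of (the multigraph of) `A` into (the multigraph of) `B`:
injective on vertices and on edges, preserving directed incidence. -/
structure Emb (A B : FlowGraph) where
  vmap : A.V → B.V
  emap : A.E → B.E
  vinj : Function.Injective vmap
  einj : Function.Injective emap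
  src_map : ∀ e, B.src (emap e) = vmap (A.src e)
  tgt_map : ∀ e, B.tgt (emap e) = vmap (A.tgt e)

/-- `(V₁, E₁)` is a subgraph: all endpoints of edges in `E₁` lie in `V₁`. -/
def IsSubgraph (A : FlowGraph) (VS : Set A.V) (ES : Set A.E) : Prop :=
  ∀ e ∈ ES, A.src e ∈ VS ∧ A.tgt e ∈ VS

/-- The subgraph `(VS, ES)` is connected. -/
def SubConnected (A : FlowGraph) (VS : Set A.V) (ES : Set A.E) : Prop :=
  ∀ u ∈ VS, ∀ v ∈ VS, A.reachOn ES u v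

/-- An `(s,t)`-splitting of `A`: two connected subgraphs, the first containing
`s_A`, the second containing `t_A`, whose edge sets partition the edges of `A`. -/
def IsSplitting (A : FlowGraph) (V₁ V₂ : Set A.V) (E₁ E₂ : Set A.E) : Prop :=
  A.IsSubgraph V₁ E₁ ∧ A.IsSubgraph V₂ E₂ ∧
  A.SubConnected V₁ E₁ ∧ A.SubConnected V₂ E₂ ∧
  A.s ∈ V₁ ∧ A.t ∈ V₂ ∧
  E₁ ∪ E₂ = Set.univ ∧ E₁ ∩ E₂ = ∅

/-- The weak order `A ⩽ B`: there is an `(s,t)`-splitting `(H₁, H₂)` of `A` and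
graph embeddings `φᵢ : Hᵢ → B` with `φ₁ s_A = s_B`, `φ₂ t_A = t_B`, and whose
edge images are disjoint. -/
def weakLE (A B : FlowGraph) : Prop :=
  ∃ (V₁ V₂ : Set A.V) (E₁ E₂ : Set A.E)
    (φ₁V φ₂V : A.V → B.V) (φ₁E φ₂E : A.E → B.E),
    A.IsSplitting V₁ V₂ E₁ E₂ ∧
    Set.InjOn φ₁V V₁ ∧ Set.InjOn φ₂V V₂ ∧
    Set.InjOn φ₁E E₁ ∧ Set.InjOn φ₂E E₂ ∧
    (∀ e ∈ E₁, B.src (φ₁E e) = φ₁V (A.src e) ∧ B.tgt (φ₁E e) = φ₁V (A.tgt e)) ∧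
    (∀ e ∈ E₂, B.src (φ₂E e) = φ₂V (A.src e) ∧ B.tgt (φ₂E e) = φ₂V (A.tgt e)) ∧
    φ₁V A.s = B.s ∧ φ₂V A.t = B.t ∧
    (φ₁E '' E₁) ∩ (φ₂E '' E₂) = ∅

/-- `k`-fold sum `C ⊕ C ⊕ ⋯ ⊕ C` (`k` summands); `smul 0 C = F₀`. -/
def smul : ℕ → FlowGraph → FlowGraph
  | 0, _ => F0
  | n + 1, C => C.add (smul n C)

/-- Sum of a head flow graph with a list of further summands:
`sumList A₀ [A₁, …, Aₖ] = A₀ ⊕ A₁ ⊕ ⋯ ⊕ Aₖ`. -/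
def sumList (A : FlowGraph) (L : List FlowGraph) : FlowGraph := L.foldl add A

/-- `A` is ⊕-irreducible: it is not (isomorphic to) a sum of two nontrivial flow graphs. -/
def IsIrreducible (A : FlowGraph) : Prop :=
  ¬ ∃ B C : FlowGraph, B.Connected ∧ C.Connected ∧
      ¬ B.Iso F0 ∧ ¬ C.Iso F0 ∧ A.Iso (B.add C)

end FlowGraph

namespace FlowGraph

theorem Iso.symm {A B : FlowGraph} (h : A.Iso B) : B.Iso A := by
  obtain ⟨φV, φE, hs, ht, hS, hT⟩ := h
  refine ⟨φV.symm, φE.symm, fun e => ?_, fun e => ?_, ?_, ?_⟩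
  · have := hs (φE.symm e)
    rw [Equiv.apply_symm_apply] at this
    rw [this, Equiv.symm_apply_apply]
  · have := ht (φE.symm e)
    rw [Equiv.apply_symm_apply] at this
    rw [this, Equiv.symm_apply_apply]
  · rw [← hS, Equiv.symm_apply_apply]
  · rw [← hT, Equiv.symm_apply_apply]

/-! ### Addition -/

def addVmap (n m : ℕ) : Quot (addRel (pathGraph n) (pathGraph m)) → Fin (n + m + 1) :=
  Quot.lift
    (Sum.elim (fun i => ⟨i.1, by have := i.2; omega⟩) (fun j => ⟨n + j.1, by have := j.2; omega⟩))
    (by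
      rintro x y ⟨rfl, rfl⟩
      apply Fin.ext
      simp [pathGraph])

def addVequiv (n m : ℕ) : Quot (addRel (pathGraph n) (pathGraph m)) ≃ Fin (n + m + 1) where
  toFun := addVmap n m
  invFun k :=
    if h : (k : ℕ) < n then Quot.mk _ (Sum.inl ⟨k, by omega⟩)
    else Quot.mk _ (Sum.inr ⟨(k : ℕ) - n, by have := k.2; omega⟩)
  left_inv := by
    apply Quot.ind
    rintro (⟨iv, hiv⟩ | ⟨jv, hjv⟩) <;> dsimp only
    · split
      next h => rfl
      next h =>
        have h' : ¬ iv < n := h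
        have e1 : Quot.mk (addRel (pathGraph n) (pathGraph m)) (Sum.inl ((pathGraph n).t))
            = Quot.mk _ (Sum.inr ((pathGraph m).s)) := Quot.sound ⟨rfl, rfl⟩
        exact ((congrArg (fun z : Fin (m + 1) =>
            Quot.mk (addRel (pathGraph n) (pathGraph m)) (Sum.inr z))
            (Fin.ext (show iv - n = 0 by omega))).trans e1.symm).trans
          (congrArg (fun z : Fin (n + 1) =>
            Quot.mk (addRel (pathGraph n) (pathGraph m)) (Sum.inl z))
            (Fin.ext (show n = iv by omega)))
    · split
      next h =>
        exact absurd (show n + jv < n from h) (by omega)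
      next h =>
        exact congrArg (fun z : Fin (m + 1) =>
          Quot.mk (addRel (pathGraph n) (pathGraph m)) (Sum.inr z))
          (Fin.ext (show n + jv - n = jv by omega))
  right_inv k := by
    dsimp only
    split
    next h => rfl
    next h => exact Fin.ext (show n + ((k : ℕ) - n) = (k : ℕ) by omega)

theorem pathGraph_add (n m : ℕ) :
    (pathGraph (n + m)).Iso ((pathGraph n).add (pathGraph m)) := by
  apply Iso.symm
  refine ⟨addVequiv n m, finSumFinEquiv, ?_, ?_, ?_, ?_⟩
  · rintro (a | b) <;> exact Fin.ext rfl
  · rintro (a | ⟨bv, hbv⟩)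
    · exact Fin.ext rfl
    · exact Fin.ext (show n + bv + 1 = n + (bv + 1) by omega)
  · exact Fin.ext rfl
  · exact Fin.ext rfl

/-! ### Multiplication -/

def mulVmap (n m : ℕ) : Quot (mulRel (pathGraph n) (pathGraph m)) → Fin (n * m + 1) :=
  Quot.lift
    (Sum.elim
      (fun i => ⟨i.1 * m, Nat.lt_succ_of_le (Nat.mul_le_mul_right m (by have := i.2; omega))⟩)
      (fun p => ⟨p.1.1 * m + p.2.1, Nat.lt_succ_of_le (by
        have h1 : p.1.1 + 1 ≤ n := p.1.2
        have h2 : p.2.1 ≤ m := by have := p.2.2; omega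
        calc p.1.1 * m + p.2.1 ≤ p.1.1 * m + m := by omega
          _ = (p.1.1 + 1) * m := (Nat.succ_mul _ _).symm
          _ ≤ n * m := Nat.mul_le_mul_right m h1)⟩))
    (by
      rintro x y ⟨e, ⟨rfl, rfl⟩ | ⟨rfl, rfl⟩⟩ <;> apply Fin.ext <;>
        simp [pathGraph, Fin.last, Nat.succ_mul]
      case inl => exact Or.inl rfl
      case inr => exact (Nat.succ_mul _ _).symm)

def mulVequiv (n m : ℕ) (hm : 0 < m) :
    Quot (mulRel (pathGraph n) (pathGraph m)) ≃ Fin (n * m + 1) where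
  toFun := mulVmap n m
  invFun k :=
    if h : (k : ℕ) = n * m then Quot.mk _ (Sum.inl (Fin.last n))
    else Quot.mk _ (Sum.inr
      (⟨(k : ℕ) / m, (Nat.div_lt_iff_lt_mul hm).2 (by have := k.2; omega)⟩,
       ⟨(k : ℕ) % m, by have := Nat.mod_lt (k : ℕ) hm; omega⟩))
  left_inv := by
    apply Quot.ind
    rintro (⟨iv, hiv⟩ | ⟨⟨ev, hev⟩, ⟨jv, hjv⟩⟩) <;> dsimp only
    · split
      next h =>
        have h' : iv * m = n * m := h
        have hi : iv = n := Nat.eq_of_mul_eq_mul_right hm h'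
        exact congrArg (fun z : Fin (n + 1) =>
          Quot.mk (mulRel (pathGraph n) (pathGraph m)) (Sum.inl z))
          (Fin.ext (show n = iv from hi.symm))
      next h =>
        have h' : ¬ iv * m = n * m := h
        have hi : iv < n := by
          rcases Nat.lt_or_ge iv n with h1 | h1
          · exact h1
          · exact absurd (by rw [show iv = n by omega]) h'
        refine Quot.sound ⟨⟨iv, hi⟩, Or.inl ⟨?_, ?_⟩⟩
        · refine congrArg Sum.inr (Prod.ext (Fin.ext ?_) (Fin.ext ?_))
          · show iv * m / m = iv
            exact Nat.mul_div_cancel _ hm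
          · show iv * m % m = 0
            exact Nat.mul_mod_left _ _
        · exact congrArg Sum.inl (Fin.ext rfl)
    · have hsm : (ev + 1) * m = ev * m + m := Nat.succ_mul _ _
      have hem : (ev + 1) * m ≤ n * m := Nat.mul_le_mul_right m hev
      split
      next h =>
        have h' : ev * m + jv = n * m := h
        have hjm : jv = m := by omega
        have hen : ev + 1 = n := Nat.eq_of_mul_eq_mul_right hm (by omega)
        refine (Quot.sound ⟨⟨ev, hev⟩, Or.inr ⟨?_, ?_⟩⟩).symm
        · exact congrArg Sum.inr (Prod.ext rfl (Fin.ext (show jv = m from hjm)))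
        · exact congrArg Sum.inl (Fin.ext (show n = ev + 1 from hen.symm))
      next h =>
        have h' : ¬ ev * m + jv = n * m := h
        by_cases hj : jv < m
        · have hd : (ev * m + jv) / m = ev := by
            rw [Nat.add_comm, Nat.add_mul_div_right _ _ hm, Nat.div_eq_of_lt hj, Nat.zero_add]
          have hmo : (ev * m + jv) % m = jv := by
            rw [Nat.add_comm, Nat.add_mul_mod_self_right, Nat.mod_eq_of_lt hj]
          exact congrArg (fun z : Fin n × Fin (m + 1) =>
            Quot.mk (mulRel (pathGraph n) (pathGraph m)) (Sum.inr z))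
            (Prod.ext (Fin.ext (show (ev * m + jv) / m = ev from hd))
              (Fin.ext (show (ev * m + jv) % m = jv from hmo)))
        · have hjm : jv = m := by omega
          have hval : ev * m + jv = (ev + 1) * m := by omega
          have hlt : (ev + 1) * m < n * m := by omega
          have he1 : ev + 1 < n := Nat.lt_of_mul_lt_mul_right hlt
          have hd : (ev * m + jv) / m = ev + 1 := by
            rw [hval, Nat.mul_div_cancel _ hm]
          have hmo : (ev * m + jv) % m = 0 := by
            rw [hval, Nat.mul_mod_left]
          have s1 : Quot.mk (mulRel (pathGraph n) (pathGraph m))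
              (Sum.inr ((⟨ev, hev⟩ : Fin n), (⟨jv, hjv⟩ : Fin (m + 1))))
              = Quot.mk _ (Sum.inl ((pathGraph n).tgt ⟨ev, hev⟩)) := by
            refine Quot.sound ⟨⟨ev, hev⟩, Or.inr ⟨?_, rfl⟩⟩
            exact congrArg Sum.inr (Prod.ext rfl (Fin.ext (show jv = m from hjm)))
          have s2 : Quot.mk (mulRel (pathGraph n) (pathGraph m))
              (Sum.inr ((⟨ev + 1, he1⟩ : Fin n), (0 : Fin (m + 1))))
              = Quot.mk _ (Sum.inl ((pathGraph n).src ⟨ev + 1, he1⟩)) :=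
            Quot.sound ⟨⟨ev + 1, he1⟩, Or.inl ⟨rfl, rfl⟩⟩
          have s3 : (pathGraph n).tgt (⟨ev, hev⟩ : Fin n)
              = (pathGraph n).src (⟨ev + 1, he1⟩ : Fin n) := Fin.ext rfl
          rw [s3] at s1
          refine Eq.trans ?_ (s2.trans s1.symm)
          exact congrArg (fun z : Fin n × Fin (m + 1) =>
            Quot.mk (mulRel (pathGraph n) (pathGraph m)) (Sum.inr z))
            (Prod.ext (Fin.ext (show (ev * m + jv) / m = ev + 1 from hd))
              (Fin.ext (show (ev * m + jv) % m = 0 from hmo)))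
  right_inv k := by
    dsimp only
    split
    next h =>
      apply Fin.ext
      show n * m = (k : ℕ)
      exact h.symm
    next h =>
      apply Fin.ext
      show (k : ℕ) / m * m + (k : ℕ) % m = (k : ℕ)
      rw [Nat.mul_comm]
      exact Nat.div_add_mod _ _

def mulEequiv (n m : ℕ) (hm : 0 < m) : Fin n × Fin m ≃ Fin (n * m) where
  toFun p := ⟨p.1.1 * m + p.2.1, by
    calc p.1.1 * m + p.2.1 < p.1.1 * m + m := by have := p.2.2; omega
      _ = (p.1.1 + 1) * m := (Nat.succ_mul _ _).symm
      _ ≤ n * m := Nat.mul_le_mul_right m p.1.2⟩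
  invFun k := (⟨(k : ℕ) / m, (Nat.div_lt_iff_lt_mul hm).2 k.2⟩,
               ⟨(k : ℕ) % m, Nat.mod_lt _ hm⟩)
  left_inv p := by
    refine Prod.ext (Fin.ext ?_) (Fin.ext ?_)
    · show (p.1.1 * m + p.2.1) / m = p.1.1
      rw [Nat.add_comm, Nat.add_mul_div_right _ _ hm, Nat.div_eq_of_lt p.2.2, Nat.zero_add]
    · show (p.1.1 * m + p.2.1) % m = p.2.1
      rw [Nat.add_comm, Nat.add_mul_mod_self_right, Nat.mod_eq_of_lt p.2.2]
  right_inv k := by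
    apply Fin.ext
    show (k : ℕ) / m * m + (k : ℕ) % m = (k : ℕ)
    rw [Nat.mul_comm]
    exact Nat.div_add_mod _ _

theorem pathGraph_mul_pos (n m : ℕ) (hm : 0 < m) :
    (pathGraph (n * m)).Iso ((pathGraph n).mul (pathGraph m)) := by
  apply Iso.symm
  refine ⟨mulVequiv n m hm, mulEequiv n m hm, ?_, ?_, ?_, ?_⟩
  · rintro ⟨e, f⟩
    exact Fin.ext rfl
  · rintro ⟨⟨ev, hev⟩, ⟨fv, hfv⟩⟩
    exact Fin.ext (show ev * m + fv + 1 = ev * m + (fv + 1) by omega)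
  · exact Fin.ext (show (0 : ℕ) * m = 0 from Nat.zero_mul m)
  · exact Fin.ext rfl

theorem pathGraph_mul_zero (n : ℕ) :
    (pathGraph (n * 0)).Iso ((pathGraph n).mul (pathGraph 0)) := by
  apply Iso.symm
  have key : ∀ (k : ℕ) (h : k < n + 1),
      Quot.mk (mulRel (pathGraph n) (pathGraph 0)) (Sum.inl ⟨k, h⟩)
        = Quot.mk _ (Sum.inl ((pathGraph n).s)) := by
    intro k
    induction k with
    | zero =>
      intro h
      exact congrArg (fun z : Fin (n + 1) =>
        Quot.mk (mulRel (pathGraph n) (pathGraph 0)) (Sum.inl z)) (Fin.ext rfl)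
    | succ k ih =>
      intro h
      have hk : k < n := by omega
      have hst : (pathGraph 0).s = (pathGraph 0).t := Fin.ext rfl
      have s1 : Quot.mk (mulRel (pathGraph n) (pathGraph 0))
          (Sum.inr ((⟨k, hk⟩ : Fin n), (pathGraph 0).s))
          = Quot.mk _ (Sum.inl ((pathGraph n).src ⟨k, hk⟩)) :=
        Quot.sound ⟨⟨k, hk⟩, Or.inl ⟨rfl, rfl⟩⟩
      have s2 : Quot.mk (mulRel (pathGraph n) (pathGraph 0))
          (Sum.inr ((⟨k, hk⟩ : Fin n), (pathGraph 0).t))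
          = Quot.mk _ (Sum.inl ((pathGraph n).tgt ⟨k, hk⟩)) :=
        Quot.sound ⟨⟨k, hk⟩, Or.inr ⟨rfl, rfl⟩⟩
      rw [← hst] at s2
      have h1 : (pathGraph n).src (⟨k, hk⟩ : Fin n) = (⟨k, by omega⟩ : Fin (n + 1)) :=
        Fin.ext rfl
      have h2 : (pathGraph n).tgt (⟨k, hk⟩ : Fin n) = (⟨k + 1, h⟩ : Fin (n + 1)) :=
        Fin.ext rfl
      rw [h1] at s1
      rw [h2] at s2
      rw [← s2, s1, ih]
  have key' : ∀ i : Fin (n + 1),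
      Quot.mk (mulRel (pathGraph n) (pathGraph 0)) (Sum.inl i)
        = Quot.mk _ (Sum.inl ((pathGraph n).s)) := by
    intro i
    obtain ⟨iv, hiv⟩ := i
    exact key iv hiv
  refine ⟨⟨fun _ => ⟨0, Nat.succ_pos _⟩,
      fun _ => Quot.mk _ (Sum.inl ((pathGraph n).s)), ?_, ?_⟩,
      ⟨fun p => Fin.elim0 (Prod.snd p), fun k => Fin.elim0 (Fin.cast (Nat.mul_zero n) k),
       fun p => Fin.elim0 (Prod.snd p), fun k => Fin.elim0 (Fin.cast (Nat.mul_zero n) k)⟩,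
      fun p => Fin.elim0 (Prod.snd p), fun p => Fin.elim0 (Prod.snd p),
      Fin.ext ?_, Fin.ext ?_⟩
  · apply Quot.ind
    rintro (i | ⟨e, ⟨jv, hjv⟩⟩)
    · exact (key' i).symm
    · have hj : Quot.mk (mulRel (pathGraph n) (pathGraph 0))
          (Sum.inr (e, (⟨jv, hjv⟩ : Fin 1)))
          = Quot.mk _ (Sum.inl ((pathGraph n).src e)) := by
        refine Quot.sound ⟨e, Or.inl ⟨?_, rfl⟩⟩
        exact congrArg Sum.inr (Prod.ext rfl (Fin.ext (show jv = 0 by omega)))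
      rw [hj]
      exact (key' _).symm
  · intro k
    obtain ⟨kv, hkv⟩ := k
    exact Fin.ext (show (0 : ℕ) = kv by omega)
  · show (0 : ℕ) = 0
    rfl
  · show (0 : ℕ) = n * 0
    omega

/-! ### Weak order -/

theorem pathGraph_adj_symm (n : ℕ) (ES : Set (pathGraph n).E) :
    Symmetric ((pathGraph n).adjOn ES) := by
  rintro a b ⟨e, he, h | h⟩
  · exact ⟨e, he, Or.inr h⟩
  · exact ⟨e, he, Or.inl h⟩

theorem pathGraph_reach_zero (n : ℕ) (v : Fin (n + 1)) :
    (pathGraph n).reachOn Set.univ (0 : Fin (n + 1)) v := by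
  obtain ⟨k, hk⟩ := v
  induction k with
  | zero =>
    have h0 : (⟨0, hk⟩ : Fin (n + 1)) = 0 := Fin.ext rfl
    rw [h0]
    exact Relation.ReflTransGen.refl
  | succ k ih =>
    refine Relation.ReflTransGen.tail (ih (by omega)) ?_
    exact ⟨⟨k, by omega⟩, trivial, Or.inl ⟨Fin.ext rfl, Fin.ext rfl⟩⟩

theorem pathGraph_connected (n : ℕ) (u v : Fin (n + 1)) :
    (pathGraph n).reachOn Set.univ u v := by
  have hsym : Symmetric ((pathGraph n).reachOn Set.univ) :=
    fun a b hab => (@Relation.ReflTransGen.symmetric _ _ ⟨fun x y h => pathGraph_adj_symm n _ h⟩).symm a b hab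
  exact Relation.ReflTransGen.trans (hsym (pathGraph_reach_zero n u)) (pathGraph_reach_zero n v)

theorem pathGraph_weakLE_of_le {n m : ℕ} (h : n ≤ m) :
    (pathGraph n).weakLE (pathGraph m) := by
  refine ⟨Set.univ, {(pathGraph n).t}, Set.univ, ∅,
    Fin.castLE (by omega), fun _ => Fin.last m, Fin.castLE h, Fin.castLE h,
    ⟨fun e _ => ⟨trivial, trivial⟩, fun e he => absurd he (Set.notMem_empty e),
      fun u _ v _ => pathGraph_connected n u v,
      ?_, trivial, rfl, by simp, by simp⟩,
    (Fin.castLE_injective _).injOn, ?_, (Fin.castLE_injective _).injOn, Set.injOn_empty _,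
    fun e _ => ⟨Fin.ext rfl, Fin.ext rfl⟩,
    fun e he => absurd he (Set.notMem_empty e),
    Fin.ext rfl, rfl, Set.eq_empty_of_subset_empty (fun x hx => by
      obtain ⟨_, y, hy, _⟩ := hx; exact absurd hy (Set.notMem_empty y))⟩
  · intro u hu v hv
    rw [Set.mem_singleton_iff] at hu hv
    rw [hu, hv]
    exact Relation.ReflTransGen.refl
  · intro a ha b hb _
    rw [Set.mem_singleton_iff] at ha hb
    rw [ha, hb]

theorem le_of_pathGraph_weakLE {n m : ℕ} (h : (pathGraph n).weakLE (pathGraph m)) :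
    n ≤ m := by
  classical
  obtain ⟨V₁, V₂, E₁, E₂, φ₁V, φ₂V, φ₁E, φ₂E,
    ⟨_, _, _, _, _, _, hEU, hEI⟩, _, _, hI1, hI2, _, _, _, _, hdisj⟩ := h
  have hmem : ∀ x : Fin n, x ∈ E₁ ∨ x ∈ E₂ := by
    intro x
    have : x ∈ E₁ ∪ E₂ := hEU ▸ Set.mem_univ x
    exact this
  set F : Fin n → Fin m := fun e => if e ∈ E₁ then φ₁E e else φ₂E e with hF
  have hFinj : Function.Injective F := by
    intro a b hab
    simp only [hF] at hab
    by_cases ha : a ∈ E₁ <;> by_cases hb : b ∈ E₁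
    · replace hab := (if_pos ha).symm.trans (hab.trans (if_pos hb))
      exact hI1 ha hb hab
    · replace hab := (if_pos ha).symm.trans (hab.trans (if_neg hb))
      exfalso
      have hb2 : b ∈ E₂ := (hmem b).resolve_left hb
      have hx : φ₁E a ∈ (φ₁E '' E₁) ∩ (φ₂E '' E₂) :=
        ⟨⟨a, ha, rfl⟩, ⟨b, hb2, hab.symm⟩⟩
      rw [hdisj] at hx
      exact hx
    · replace hab := (if_neg ha).symm.trans (hab.trans (if_pos hb))
      exfalso
      have ha2 : a ∈ E₂ := (hmem a).resolve_left ha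
      have hx : φ₁E b ∈ (φ₁E '' E₁) ∩ (φ₂E '' E₂) :=
        ⟨⟨b, hb, rfl⟩, ⟨a, ha2, hab⟩⟩
      rw [hdisj] at hx
      exact hx
    · replace hab := (if_neg ha).symm.trans (hab.trans (if_neg hb))
      exact hI2 ((hmem a).resolve_left ha) ((hmem b).resolve_left hb) hab
  have hcard := Fintype.card_le_of_injective F hFinj
  simpa using hcard

def finBoolEquiv : Fin 2 ≃ Bool :=
  ⟨fun i => i.1 == 1, fun b => bif b then 1 else 0, by decide, by decide⟩

end FlowGraph


open FlowGraph in
/-- The map `i : ℕ → FlowGraph`, `i n = Fₙ`, is injective (up to isomorphism) and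
satisfies `i 0 = F₀`, `i 1 = F₁`, `i (n+m) = i n ⊕ i m`, `i (n·m) = i n ⊗ i m`, and
`n ≤ m ↔ i n ⩽ i m` in the weak order: the standard model of arithmetic embeds in
the flow graph structure. -/
theorem flowGraph_standard_submodel :
    (∀ n m : ℕ, (pathGraph n).Iso (pathGraph m) → n = m) ∧
    (pathGraph 0).Iso F0 ∧
    (pathGraph 1).Iso F1 ∧
    (∀ n m : ℕ, (pathGraph (n + m)).Iso ((pathGraph n).add (pathGraph m))) ∧
    (∀ n m : ℕ, (pathGraph (n * m)).Iso ((pathGraph n).mul (pathGraph m))) ∧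
    (∀ n m : ℕ, n ≤ m ↔ (pathGraph n).weakLE (pathGraph m)) := by
  refine ⟨?_, ?_, ?_, pathGraph_add, ?_, ?_⟩
  · rintro n m ⟨φV, φE, -, -, -, -⟩
    have φ : Fin (n + 1) ≃ Fin (m + 1) := φV
    have hc := Fintype.card_congr φ
    simpa using hc
  · exact ⟨Equiv.equivPUnit (Fin 1), Equiv.equivEmpty (Fin 0),
      fun e => e.elim0, fun e => e.elim0, rfl, rfl⟩
  · refine ⟨finBoolEquiv, Equiv.equivPUnit (Fin 1), ?_, ?_, ?_, ?_⟩
    · rintro ⟨ev, hev⟩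
      have h0 : ev = 0 := by omega
      subst h0
      rfl
    · rintro ⟨ev, hev⟩
      have h0 : ev = 0 := by omega
      subst h0
      rfl
    · rfl
    · rfl
  · intro n m
    rcases Nat.eq_zero_or_pos m with hm | hm
    · subst hm; exact pathGraph_mul_zero n
    · exact pathGraph_mul_pos n m hm
  · exact fun n m => ⟨pathGraph_weakLE_of_le, le_of_pathGraph_weakLE⟩
end

section
/- If A and B are flow graphs such that A ⊕ B is an st-flow graph, then A and B are both st-flow graphs. -/
namespace FlowGraph

section Aux

variable (A B : FlowGraph)

/-- Projection to `A`: sends every `B`-vertex to `A.t`. -/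
def projA : (A.add B).V → A.V :=
  Quot.lift (Sum.elim id fun _ => A.t) (by rintro x y ⟨rfl, rfl⟩; rfl)

/-- Projection to `B`: sends every `A`-vertex to `B.s`. -/
def projB : (A.add B).V → B.V :=
  Quot.lift (Sum.elim (fun _ => B.s) id) (by rintro x y ⟨rfl, rfl⟩; rfl)

variable {A B}

lemma inl_inj {a a' : A.V}
    (h : Quot.mk (addRel A B) (.inl a) = Quot.mk (addRel A B) (.inl a')) : a = a' :=
  congrArg (projA A B) h

lemma inr_inj {b b' : B.V}
    (h : Quot.mk (addRel A B) (.inr b) = Quot.mk (addRel A B) (.inr b')) : b = b' :=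
  congrArg (projB A B) h

lemma inl_eq_inr {a : A.V} {b : B.V}
    (h : Quot.mk (addRel A B) (.inl a) = Quot.mk (addRel A B) (.inr b)) :
    a = A.t ∧ b = B.s :=
  ⟨congrArg (projA A B) h, (congrArg (projB A B) h).symm⟩

lemma glue_eq : Quot.mk (addRel A B) (.inl A.t) = Quot.mk (addRel A B) (.inr B.s) :=
  Quot.sound ⟨rfl, rfl⟩

/-- Lift a list of `A`-steps to the sum. -/
def mapA (l : List (A.E × Bool)) : List ((A.add B).E × Bool) :=
  l.map (fun p => (Sum.inl p.1, p.2))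

/-- Lift a list of `B`-steps to the sum. -/
def mapB (l : List (B.E × Bool)) : List ((A.add B).E × Bool) :=
  l.map (fun p => (Sum.inr p.1, p.2))

lemma add_stepSrc_inl (e : A.E) (d : Bool) :
    (A.add B).stepSrc (Sum.inl e, d) = Quot.mk (addRel A B) (.inl (A.stepSrc (e, d))) := by
  cases d <;> rfl

lemma add_stepTgt_inl (e : A.E) (d : Bool) :
    (A.add B).stepTgt (Sum.inl e, d) = Quot.mk (addRel A B) (.inl (A.stepTgt (e, d))) := by
  cases d <;> rfl

lemma add_stepSrc_inr (e : B.E) (d : Bool) :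
    (A.add B).stepSrc (Sum.inr e, d) = Quot.mk (addRel A B) (.inr (B.stepSrc (e, d))) := by
  cases d <;> rfl

lemma add_stepTgt_inr (e : B.E) (d : Bool) :
    (A.add B).stepTgt (Sum.inr e, d) = Quot.mk (addRel A B) (.inr (B.stepTgt (e, d))) := by
  cases d <;> rfl

lemma isWalk_mapA {u v : A.V} : ∀ {l : List (A.E × Bool)}, A.IsWalk u v l →
    (A.add B).IsWalk (Quot.mk (addRel A B) (.inl u)) (Quot.mk (addRel A B) (.inl v)) (mapA l) := by
  intro l
  induction l generalizing u with
  | nil => intro h; exact congrArg _ (congrArg _ h)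
  | cons p l ih =>
    rintro ⟨h1, h2⟩
    refine ⟨by rw [add_stepSrc_inl, h1], ?_⟩
    rw [add_stepTgt_inl]
    exact ih h2

lemma walkVertices_mapA (u : A.V) : ∀ (l : List (A.E × Bool)),
    (A.add B).walkVertices (Quot.mk (addRel A B) (.inl u)) (mapA l) =
      (A.walkVertices u l).map (fun a => Quot.mk (addRel A B) (.inl a)) := by
  intro l
  induction l generalizing u with
  | nil => rfl
  | cons p l ih =>
    show _ :: _ = _ :: _
    rw [add_stepTgt_inl]
    exact congrArg _ (ih _)

lemma walkVertices_mapB (u : B.V) : ∀ (l : List (B.E × Bool)),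
    (A.add B).walkVertices (Quot.mk (addRel A B) (.inr u)) (mapB l) =
      (B.walkVertices u l).map (fun b => Quot.mk (addRel A B) (.inr b)) := by
  intro l
  induction l generalizing u with
  | nil => rfl
  | cons p l ih =>
    show _ :: _ = _ :: _
    rw [add_stepTgt_inr]
    exact congrArg _ (ih _)

lemma end_mem_walkVertices {G : FlowGraph} {u v : G.V} :
    ∀ {l : List (G.E × Bool)}, G.IsWalk u v l → v ∈ G.walkVertices u l := by
  intro l
  induction l generalizing u with
  | nil => intro h; exact h ▸ List.mem_singleton.2 rfl
  | cons p l ih =>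
    rintro ⟨_, h2⟩
    exact List.mem_cons_of_mem _ (ih h2)

lemma mem_walkVertices_append {G : FlowGraph} {x : G.V} {u : G.V} :
    ∀ {l1 : List (G.E × Bool)} (l2 : List (G.E × Bool)),
      x ∈ G.walkVertices u l1 → x ∈ G.walkVertices u (l1 ++ l2) := by
  intro l1
  induction l1 generalizing u with
  | nil =>
    intro l2 h
    rcases List.mem_singleton.1 h with rfl
    cases l2 with
    | nil => exact List.mem_singleton.2 rfl
    | cons q l2 => exact List.mem_cons_self
  | cons p l1 ih =>
    intro l2 h
    rcases List.mem_cons.1 h with rfl | h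
    · exact List.mem_cons_self
    · exact List.mem_cons_of_mem _ (ih l2 h)

/-- The key decomposition: a nodup walk in `A ⊕ B` ending at `t_B` decomposes. -/
lemma main_decomp : ∀ l : List ((A.add B).E × Bool),
    (∀ a : A.V,
      (A.add B).IsWalk (Quot.mk (addRel A B) (.inl a)) (Quot.mk (addRel A B) (.inr B.t)) l →
      ((A.add B).walkVertices (Quot.mk (addRel A B) (.inl a)) l).Nodup →
      ∃ (lA : List (A.E × Bool)) (lB : List (B.E × Bool)),
        l = mapA lA ++ mapB lB ∧
        A.IsWalk a A.t lA ∧ (A.walkVertices a lA).Nodup ∧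
        B.IsWalk B.s B.t lB ∧ (B.walkVertices B.s lB).Nodup) ∧
    (∀ b : B.V,
      (A.add B).IsWalk (Quot.mk (addRel A B) (.inr b)) (Quot.mk (addRel A B) (.inr B.t)) l →
      ((A.add B).walkVertices (Quot.mk (addRel A B) (.inr b)) l).Nodup →
      ∃ lB : List (B.E × Bool),
        l = mapB lB ∧ B.IsWalk b B.t lB ∧ (B.walkVertices b lB).Nodup) := by
  intro l
  induction l with
  | nil =>
    constructor
    · intro a hw _
      obtain ⟨ha, hb⟩ := inl_eq_inr hw
      exact ⟨[], [], rfl, ha, List.nodup_singleton _, hb ▸ rfl, List.nodup_singleton _⟩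
    · intro b hw _
      exact ⟨[], rfl, inr_inj hw, List.nodup_singleton _⟩
  | cons p l ih =>
    obtain ⟨e | e, d⟩ := p
    · constructor
      · -- start in A, first edge in A
        rintro a ⟨h1, h2⟩ hnd
        rw [add_stepSrc_inl] at h1
        rw [add_stepTgt_inl] at h2
        obtain ⟨hne, hnd'⟩ := List.nodup_cons.1 hnd
        rw [add_stepTgt_inl] at hnd' hne
        obtain ⟨lA, lB, hl, hwA, hndA, hwB, hndB⟩ := ih.1 _ h2 hnd'
        refine ⟨(e, d) :: lA, lB, by rw [hl]; rfl, ⟨inl_inj h1, hwA⟩, ?_, hwB, hndB⟩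
        refine List.nodup_cons.2 ⟨fun hmem => hne ?_, hndA⟩
        rw [hl]
        exact mem_walkVertices_append _
          ((walkVertices_mapA _ lA).symm ▸ List.mem_map_of_mem hmem)
      · -- start in B, first edge in A: the start must be the glue vertex,
        -- and the A-walk returns to the glue vertex, contradicting nodup
        rintro b ⟨h1, h2⟩ hnd
        exfalso
        rw [add_stepSrc_inl] at h1
        rw [add_stepTgt_inl] at h2
        obtain ⟨hne, hnd'⟩ := List.nodup_cons.1 hnd
        rw [add_stepTgt_inl] at hnd' hne
        obtain ⟨hst, hbs⟩ := inl_eq_inr h1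
        obtain ⟨lA, lB, hl, hwA, -, -, -⟩ := ih.1 _ h2 hnd'
        apply hne
        have hgb : Quot.mk (addRel A B) (Sum.inr b) = Quot.mk (addRel A B) (Sum.inl A.t) := by
          rw [hbs]; exact glue_eq.symm
        rw [hgb, hl]
        exact mem_walkVertices_append _
          ((walkVertices_mapA _ lA).symm ▸
            List.mem_map_of_mem (end_mem_walkVertices hwA))
    · constructor
      · -- start in A, first edge in B: start is the glue vertex
        rintro a ⟨h1, h2⟩ hnd
        rw [add_stepSrc_inr] at h1
        rw [add_stepTgt_inr] at h2
        obtain ⟨hne, hnd'⟩ := List.nodup_cons.1 hnd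
        rw [add_stepTgt_inr] at hnd' hne
        obtain ⟨hat, hbs⟩ := inl_eq_inr h1.symm
        obtain ⟨lB, hl, hwB, hndB⟩ := ih.2 _ h2 hnd'
        refine ⟨[], (e, d) :: lB, by rw [hl]; rfl, hat, List.nodup_singleton _,
          ⟨hbs, hwB⟩, List.nodup_cons.2 ⟨fun hmem => hne ?_, hndB⟩⟩
        rw [hat, glue_eq, hl]
        exact (walkVertices_mapB _ lB).symm ▸ List.mem_map_of_mem hmem
      · -- start in B, first edge in B
        rintro b ⟨h1, h2⟩ hnd
        rw [add_stepSrc_inr] at h1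
        rw [add_stepTgt_inr] at h2
        obtain ⟨hne, hnd'⟩ := List.nodup_cons.1 hnd
        rw [add_stepTgt_inr] at hnd' hne
        obtain ⟨lB, hl, hwB, hndB⟩ := ih.2 _ h2 hnd'
        refine ⟨(e, d) :: lB, by rw [hl]; rfl, ⟨inr_inj h1, hwB⟩, ?_⟩
        refine List.nodup_cons.2 ⟨fun hmem => hne ?_, hndB⟩
        rw [hl]
        exact (walkVertices_mapB _ lB).symm ▸ List.mem_map_of_mem hmem

end Aux

end FlowGraph

open FlowGraph in
/-- If `A ⊕ B` is an st-flow graph then so are `A` and `B`. -/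
theorem flowGraph_st_of_add (A B : FlowGraph)
    (hA : A.Connected) (hB : B.Connected)
    (h : (A.add B).IsSTGraph) :
    A.IsSTGraph ∧ B.IsSTGraph := by
  constructor
  · intro e
    obtain ⟨l, hw, hnd, dir, hmem⟩ := h (Sum.inl e)
    obtain ⟨lA, lB, hl, hwA, hndA, -, -⟩ := (main_decomp l).1 A.s hw hnd
    refine ⟨lA, hwA, hndA, dir, ?_⟩
    rw [hl] at hmem
    rcases List.mem_append.1 hmem with hm | hm
    · obtain ⟨⟨e', d'⟩, hm', heq⟩ := List.mem_map.1 hm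
      obtain ⟨he, hd⟩ := Prod.mk.injEq .. ▸ heq
      cases Sum.inl.inj he
      cases hd
      exact hm'
    · obtain ⟨⟨e', d'⟩, -, heq⟩ := List.mem_map.1 hm
      exact absurd (congrArg Prod.fst heq) (by simp)
  · intro e
    obtain ⟨l, hw, hnd, dir, hmem⟩ := h (Sum.inr e)
    obtain ⟨lA, lB, hl, -, -, hwB, hndB⟩ := (main_decomp l).1 A.s hw hnd
    refine ⟨lB, hwB, hndB, dir, ?_⟩
    rw [hl] at hmem
    rcases List.mem_append.1 hmem with hm | hm
    · obtain ⟨⟨e', d'⟩, -, heq⟩ := List.mem_map.1 hm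
      exact absurd (congrArg Prod.fst heq) (by simp)
    · obtain ⟨⟨e', d'⟩, hm', heq⟩ := List.mem_map.1 hm
      obtain ⟨he, hd⟩ := Prod.mk.injEq .. ▸ heq
      cases Sum.inr.inj he
      cases hd
      exact hm'
end

section
/- Let A = (G_A, s_A, t_A) be an st-flow graph, and let w be a cut vertex of G_A with w ≠ s_A and w ≠ t_A. Then w is a splitting vertex of A: deleting w from G_A yields exactly two components, with s_A and t_A lying in distinct components. -/
namespace FlowGraph

/-! ### Auxiliary lemmas -/

variable (A : FlowGraph)

lemma aux_adjOn_symm (ES : Set A.E) : Symmetric (A.adjOn ES) := by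
  rintro u v ⟨e, he, h⟩
  exact ⟨e, he, h.symm⟩

lemma aux_reach_symm {ES : Set A.E} {u v : A.V} (h : A.reachOn ES u v) :
    A.reachOn ES v u :=
  by have : Std.Symm (A.adjOn ES) := ⟨fun _ _ h' => aux_adjOn_symm A ES h'⟩
     exact (Relation.ReflTransGen.symmetric (r := A.adjOn ES)).symm _ _ h

lemma aux_mem_walkVertices_self (u : A.V) (l : List (A.E × Bool)) :
    u ∈ A.walkVertices u l := by
  cases l <;> simp [walkVertices]

/-- The end of a walk, as a function of the start and the edge list. -/
def walkEnd : A.V → List (A.E × Bool) → A.V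
  | u, [] => u
  | _, p :: l => walkEnd (A.stepTgt p) l

lemma aux_walkEnd_mem (u : A.V) (l : List (A.E × Bool)) :
    A.walkEnd u l ∈ A.walkVertices u l := by
  induction l generalizing u with
  | nil => simp [walkEnd, walkVertices]
  | cons p l ih => simpa [walkEnd, walkVertices] using Or.inr (ih (A.stepTgt p))

lemma aux_isWalk_append {l₁ l₂ : List (A.E × Bool)} {u v : A.V}
    (h : A.IsWalk u v (l₁ ++ l₂)) :
    A.IsWalk u (A.walkEnd u l₁) l₁ ∧ A.IsWalk (A.walkEnd u l₁) v l₂ := by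
  induction l₁ generalizing u with
  | nil => exact ⟨rfl, h⟩
  | cons p l ih =>
    obtain ⟨h1, h2⟩ := h
    obtain ⟨h3, h4⟩ := ih h2
    simp only [walkEnd]
    exact ⟨⟨h1, h3⟩, h4⟩

lemma aux_walkVertices_append (l₁ l₂ : List (A.E × Bool)) (u : A.V) :
    A.walkVertices u (l₁ ++ l₂) =
      A.walkVertices u l₁ ++ (A.walkVertices (A.walkEnd u l₁) l₂).tail := by
  induction l₁ generalizing u with
  | nil => cases l₂ <;> simp [walkEnd, walkVertices]
  | cons p l ih => simp [walkEnd, walkVertices, ih]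

lemma aux_reach_avoid (w : A.V) :
    ∀ (l : List (A.E × Bool)) (u v : A.V), A.IsWalk u v l →
      w ∉ A.walkVertices u l →
      A.reachOn {e | A.src e ≠ w ∧ A.tgt e ≠ w} u v := by
  intro l
  induction l with
  | nil =>
    intro u v h _
    exact h ▸ Relation.ReflTransGen.refl
  | cons p l ih =>
    intro u v h hw
    obtain ⟨h1, h2⟩ := h
    simp only [walkVertices, List.mem_cons] at hw
    push_neg at hw
    obtain ⟨hwu, hwrest⟩ := hw
    have htgt : A.stepTgt p ≠ w := by
      intro h'
      exact hwrest (h' ▸ A.aux_mem_walkVertices_self (A.stepTgt p) l)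
    have hadj : A.adjOn {e | A.src e ≠ w ∧ A.tgt e ≠ w} u (A.stepTgt p) := by
      obtain ⟨e, b⟩ := p
      cases b with
      | true =>
        have hsrc : A.src e = u := by simpa [stepSrc] using h1
        have htgt' : A.tgt e ≠ w := by simpa [stepTgt] using htgt
        exact ⟨e, ⟨hsrc ▸ Ne.symm hwu, htgt'⟩, Or.inl ⟨hsrc, by simp [stepTgt]⟩⟩
      | false =>
        have hsrc : A.tgt e = u := by simpa [stepSrc] using h1
        have htgt' : A.src e ≠ w := by simpa [stepTgt] using htgt
        exact ⟨e, ⟨htgt', hsrc ▸ Ne.symm hwu⟩, Or.inr ⟨by simp [stepTgt], hsrc⟩⟩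
    exact Relation.ReflTransGen.head hadj (ih (A.stepTgt p) v h2 hwrest)

lemma aux_st_rescue (w : A.V) (e : A.E) (he : A.HasST e) (x : A.V) (hx : x ≠ w)
    (hinc : (A.src e = x ∧ A.tgt e = w) ∨ (A.src e = w ∧ A.tgt e = x)) :
    A.reachOn {e | A.src e ≠ w ∧ A.tgt e ≠ w} x A.s ∨
      A.reachOn {e | A.src e ≠ w ∧ A.tgt e ≠ w} x A.t := by
  obtain ⟨l, hwalk, hnodup, dir, hmem⟩ := he
  obtain ⟨l₁, l₂, rfl⟩ := List.append_of_mem hmem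
  obtain ⟨hw1, hw2⟩ := A.aux_isWalk_append hwalk
  obtain ⟨hsrc, hw3⟩ := hw2
  rw [A.aux_walkVertices_append] at hnodup
  -- endpoints of the middle step
  have hstep : (A.stepSrc (e, dir) = x ∧ A.stepTgt (e, dir) = w) ∨
      (A.stepSrc (e, dir) = w ∧ A.stepTgt (e, dir) = x) := by
    cases dir <;> simp only [stepSrc, stepTgt, if_pos, if_neg, Bool.false_eq_true,
      not_false_eq_true, ite_true, ite_false] <;> tauto
  rcases hstep with ⟨hs, ht⟩ | ⟨hs, ht⟩
  · -- prefix walk from s to x avoids w; x reaches s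
    left
    refine A.aux_reach_symm ?_
    have hend : A.walkEnd A.s l₁ = x := hsrc ▸ hs
    refine A.aux_reach_avoid w l₁ A.s x (hend ▸ hw1) ?_
    intro hwmem
    have hdisj := (List.nodup_append'.mp hnodup).2.2
    have hwin : w ∈ (A.walkVertices (A.walkEnd A.s l₁) ((e, dir) :: l₂)).tail := by
      simp only [hend, walkVertices, List.tail_cons, ht]
      exact A.aux_mem_walkVertices_self w l₂
    exact hdisj hwmem hwin
  · -- suffix walk from x to t avoids w; x reaches t
    right
    have hend : A.walkEnd A.s l₁ = w := hsrc ▸ hs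
    refine A.aux_reach_avoid w ((e, dir) :: l₂).tail x A.t (ht ▸ hw3) ?_
    simp only [List.tail_cons]
    intro hwmem
    have hdisj := (List.nodup_append'.mp hnodup).2.2
    have hwleft : w ∈ A.walkVertices A.s l₁ := hend ▸ A.aux_walkEnd_mem A.s l₁
    have hwin : w ∈ (A.walkVertices (A.walkEnd A.s l₁) ((e, dir) :: l₂)).tail := by
      simp only [walkVertices, List.tail_cons, ht]
      exact hwmem
    exact hdisj hwleft hwin

lemma aux_reach_s_or_t (hA : A.Connected) (hst : A.IsSTGraph) (w : A.V)
    (v : A.V) (hv : v ≠ w) :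
    A.reachOn {e | A.src e ≠ w ∧ A.tgt e ≠ w} v A.s ∨
      A.reachOn {e | A.src e ≠ w ∧ A.tgt e ≠ w} v A.t := by
  have hreach : A.reachOn Set.univ v A.s := hA v A.s
  clear hA
  revert hv
  induction hreach using Relation.ReflTransGen.head_induction_on with
  | refl => exact fun _ => Or.inl Relation.ReflTransGen.refl
  | head hadj hrest ih =>
    rename_i a m
    intro hv
    obtain ⟨e, -, hinc⟩ := hadj
    by_cases hm : m = w
    · rcases hinc with ⟨h1, h2⟩ | ⟨h1, h2⟩
      · exact A.aux_st_rescue w e (hst e) a hv (Or.inl ⟨h1, hm ▸ h2⟩)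
      · exact A.aux_st_rescue w e (hst e) a hv (Or.inr ⟨hm ▸ h1, h2⟩)
    · have hadj' : A.adjOn {e | A.src e ≠ w ∧ A.tgt e ≠ w} a m := by
        refine ⟨e, ?_, hinc⟩
        rcases hinc with ⟨h1, h2⟩ | ⟨h1, h2⟩
        · exact ⟨h1 ▸ hv, h2 ▸ hm⟩
        · exact ⟨h1 ▸ hm, h2 ▸ hv⟩
      rcases ih hm with h | h
      · exact Or.inl (Relation.ReflTransGen.head hadj' h)
      · exact Or.inr (Relation.ReflTransGen.head hadj' h)

end FlowGraph

open FlowGraph in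
/-- In an st-flow graph, every cut vertex `w ≠ s, t` is a splitting vertex:
its deletion yields exactly two components, with `s` and `t` in distinct components. -/
theorem flowGraph_cutVertex_is_splittingVertex (A : FlowGraph)
    (hA : A.Connected) (hst : A.IsSTGraph) (w : A.V)
    (hws : w ≠ A.s) (hwt : w ≠ A.t)
    (hcut : ∃ u v : A.V, u ≠ w ∧ v ≠ w ∧
      ¬ A.reachOn {e | A.src e ≠ w ∧ A.tgt e ≠ w} u v) :
    A.IsSplittingVertex w ∧
      ∀ v : A.V, v ≠ w →
        (A.reachOn {e | A.src e ≠ w ∧ A.tgt e ≠ w} v A.s ∨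
         A.reachOn {e | A.src e ≠ w ∧ A.tgt e ≠ w} v A.t) := by
  have key := A.aux_reach_s_or_t hA hst w
  refine ⟨⟨hws, hwt, ?_⟩, key⟩
  intro hreach
  obtain ⟨u, v, hu, hv, huv⟩ := hcut
  apply huv
  have hu' := key u hu
  have hv' := key v hv
  have hts : A.reachOn {e | A.src e ≠ w ∧ A.tgt e ≠ w} A.t A.s :=
    A.aux_reach_symm hreach
  rcases hu' with h1 | h1 <;> rcases hv' with h2 | h2
  · exact h1.trans (A.aux_reach_symm h2)
  · exact h1.trans (hreach.trans (A.aux_reach_symm h2))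
  · exact h1.trans (hts.trans (A.aux_reach_symm h2))
  · exact h1.trans (A.aux_reach_symm h2)
end
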